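/- arXiv:2308.08735 — 2 statements merged into one kernel-verified Lean document; each statement's English description precedes it below -/
import Mathlib

section
/- Let f : ℝⁿ → ℝ ∪ {∞} be proper, lower semicontinuous and prox-bounded with threshold λ_f, let λ ∈ (0, λ_f), and let x̄ ∈ dom f with 0 ∈ ∂(e_λ f)(x̄). If f satisfies the level-set subdifferential error bound at x̄ with exponent γ > 0 and constant μ > 0, then the Moreau envelope e_λ f satisfies the level-set subdifferential error bound at x̄ with exponent max{1, γ} and constant λ (1 + (μ/λ)^{1/γ})^{max{1,γ}}. -/
open Filter Topology Set
open scoped ENNReal NNReal RealInnerProductSpace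

noncomputable section

variable {E : Type*} [NormedAddCommGroup E] [InnerProductSpace ℝ E]

/-- Fréchet (regular) subdifferential of an `EReal`-valued function. -/
def fsubd (f : E → EReal) (x : E) : Set E :=
  {v | f x ≠ ⊤ ∧ f x ≠ ⊥ ∧ ∀ ε : ℝ, 0 < ε → ∀ᶠ y in 𝓝 x,
      (((f x).toReal + inner ℝ v (y - x) - ε * ‖y - x‖ : ℝ) : EReal) ≤ f y}

/-- Limiting (Mordukhovich) subdifferential. -/
def lsubd (f : E → EReal) (x : E) : Set E :=
  {v | ∃ xs vs : ℕ → E, Tendsto xs atTop (𝓝 x) ∧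
      Tendsto (fun k => f (xs k)) atTop (𝓝 (f x)) ∧
      Tendsto vs atTop (𝓝 v) ∧ ∀ k, vs k ∈ fsubd f (xs k)}

/-- Sublevel set `{z | f z ≤ a}`. -/
def slev (f : E → EReal) (a : EReal) : Set E := {z | f z ≤ a}

/-- `d(0, ∂ f x)`, with the convention that the distance to the empty set is `∞`. -/
def subdist (f : E → EReal) (x : E) : ℝ≥0∞ := EMetric.infEdist 0 (lsubd f x)

/-- Conversion of an extended real to `ℝ≥0∞` (truncating negative values). -/
def toENN (a : EReal) : ℝ≥0∞ := if a = ⊤ then ⊤ else ENNReal.ofReal a.toReal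

/-- Moreau envelope `e_λ f`. -/
def moreauEnv (f : E → EReal) (lam : ℝ) (x : E) : EReal :=
  ⨅ y, f y + ((‖y - x‖ ^ 2 / (2 * lam) : ℝ) : EReal)

/-- Proximal mapping `P_λ f` (set of minimizers). -/
def proxPts (f : E → EReal) (lam : ℝ) (x : E) : Set E :=
  {y | ∀ z, f y + ((‖y - x‖ ^ 2 / (2 * lam) : ℝ) : EReal)
        ≤ f z + ((‖z - x‖ ^ 2 / (2 * lam) : ℝ) : EReal)}

/-- `f` is prox-bounded. -/
def ProxBdd (f : E → EReal) : Prop := ∃ lam > (0 : ℝ), ∃ x, moreauEnv f lam x ≠ ⊥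

/-- Threshold `λ_f` of prox-boundedness. -/
def proxThreshold (f : E → EReal) : ℝ :=
  sSup {lam | 0 < lam ∧ ∃ x, moreauEnv f lam x ≠ ⊥}

/-- `f` is proper (never `-∞`, somewhere finite). -/
def IsProperFn (f : E → EReal) : Prop := (∃ x, f x ≠ ⊤) ∧ ∀ x, f x ≠ ⊥

/-- Kurdyka–Łojasiewicz property at `xb` with exponent `γ` and constant `μ`. -/
def KLAt (f : E → EReal) (xb : E) (γ μ : ℝ) : Prop :=
  ∃ η > (0:ℝ), ∃ ν > (0:ℝ), ∀ x ∈ Metric.ball xb η,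
    f xb < f x → f x < f xb + (ν : EReal) →
    toENN (f x - f xb) ^ γ ≤ ENNReal.ofReal μ * subdist f x

/-- Level-set subdifferential error bound at `xb` with exponent `γ` and constant `μ`. -/
def LSEBAt (f : E → EReal) (xb : E) (γ μ : ℝ) : Prop :=
  ∃ η > (0:ℝ), ∃ ν > (0:ℝ), ∀ x ∈ Metric.ball xb η,
    f xb < f x → f x < f xb + (ν : EReal) →
    EMetric.infEdist x (slev f (f xb)) ^ γ ≤ ENNReal.ofReal μ * subdist f x

/-- Local Hölder error bound at `xb` with exponent `γ` and constant `μ`. -/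
def LHEBAt (f : E → EReal) (xb : E) (γ μ : ℝ) : Prop :=
  ∃ η > (0:ℝ), ∀ x ∈ Metric.ball xb η, f xb < f x →
    EMetric.infEdist x (slev f (f xb)) ^ γ ≤ ENNReal.ofReal μ * toENN (f x - f xb)

/-- Uniformized KL property on `Ω`. -/
def uKL (f : E → EReal) (Ω : Set E) (γ μ : ℝ) : Prop :=
  ∃ ε > (0:ℝ), ∃ ν > (0:ℝ), ∀ xb ∈ Ω, ∀ x, Metric.infDist x Ω < ε →
    f xb < f x → f x < f xb + (ν : EReal) →
    toENN (f x - f xb) ^ γ ≤ ENNReal.ofReal μ * subdist f x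

/-- Uniformized level-set subdifferential error bound on `Ω`. -/
def uLSEB (f : E → EReal) (Ω : Set E) (γ μ : ℝ) : Prop :=
  ∃ ε > (0:ℝ), ∃ ν > (0:ℝ), ∀ xb ∈ Ω, ∀ x, Metric.infDist x Ω < ε →
    f xb < f x → f x < f xb + (ν : EReal) →
    EMetric.infEdist x (slev f (f xb)) ^ γ ≤ ENNReal.ofReal μ * subdist f x

/-- Uniformized Hölder error bound on `Ω`. -/
def uHEB (f : E → EReal) (Ω : Set E) (γ μ : ℝ) : Prop :=
  ∃ ε > (0:ℝ), ∀ xb ∈ Ω, ∀ x, Metric.infDist x Ω < ε → f xb < f x →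
    EMetric.infEdist x (slev f (f xb)) ^ γ ≤ ENNReal.ofReal μ * toENN (f x - f xb)

/-- Prox-regularity of `f` at `xb` for `vb` with constant `ρ`. -/
def ProxRegularAt (f : E → EReal) (xb vb : E) (ρ : ℝ) : Prop :=
  vb ∈ lsubd f xb ∧ ∃ ε > (0:ℝ), ∀ x v, v ∈ lsubd f x → v ∈ Metric.ball vb ε →
    x ∈ Metric.ball xb ε → f x < f xb + (ε : EReal) → ∀ y ∈ Metric.ball xb ε,
      f x + (((inner ℝ v (y - x) : ℝ) - ρ / 2 * ‖y - x‖ ^ 2 : ℝ) : EReal) ≤ f y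


lemma moreauEnv_le (f : E → EReal) (lam : ℝ) (x y : E) :
    moreauEnv f lam x ≤ f y + ((‖y - x‖ ^ 2 / (2 * lam) : ℝ) : EReal) := iInf_le _ y

lemma moreauEnv_le_self (f : E → EReal) {lam : ℝ} (hl : 0 < lam) (x : E) :
    moreauEnv f lam x ≤ f x := by
  have h := moreauEnv_le f lam x x
  simpa using h

lemma quad_nonneg {lam : ℝ} (hl : 0 < lam) (y x : E) :
    (0:ℝ) ≤ ‖y - x‖ ^ 2 / (2 * lam) := by positivity

lemma le_add_quad (f : E → EReal) {lam : ℝ} (hl : 0 < lam) (x y : E) :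
    f y ≤ f y + ((‖y - x‖ ^ 2 / (2 * lam) : ℝ) : EReal) := by
  nth_rewrite 1 [← add_zero (f y)]
  gcongr
  exact_mod_cast quad_nonneg hl y x
set_option linter.unusedSectionVars false
set_option linter.unusedVariables false

lemma exists_lam' {f : E → EReal} {lam : ℝ} (hlam : lam ∈ Set.Ioo 0 (proxThreshold f)) :
    ∃ lam' : ℝ, lam < lam' ∧ 0 < lam' ∧ ∃ x0, moreauEnv f lam' x0 ≠ ⊥ := by
  set S := {l : ℝ | 0 < l ∧ ∃ x, moreauEnv f l x ≠ ⊥} with hS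
  have h2 : lam < sSup S := hlam.2

  have hne : S.Nonempty := by
    by_contra h
    rw [Set.not_nonempty_iff_eq_empty] at h
    rw [h, Real.sSup_empty] at h2
    linarith [hlam.1]
  obtain ⟨l', hl'S, hll'⟩ := exists_lt_of_lt_csSup hne h2
  exact ⟨l', hll', hl'S.1, hl'S.2⟩

lemma envelope_lower {f : E → EReal} (hbot : ∀ z, f z ≠ ⊥) {lam' : ℝ} {x0 : E}
    (hm : moreauEnv f lam' x0 ≠ ⊥) (y : E) :
    (((moreauEnv f lam' x0).toReal - ‖y - x0‖ ^ 2 / (2 * lam') : ℝ) : EReal) ≤ f y := by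
  have hle := moreauEnv_le f lam' x0 y
  rcases eq_top_or_lt_top (f y) with h | h
  · rw [h]; exact le_top
  have hyb := hbot y
  lift f y to ℝ using ⟨h.ne, hyb⟩ with r hr
  have hmt : moreauEnv f lam' x0 ≠ ⊤ := by
    intro h'
    rw [h'] at hle
    rw [← EReal.coe_add] at hle
    exact (EReal.coe_lt_top _).not_ge (le_of_eq (top_le_iff.mp hle).symm)
  lift moreauEnv f lam' x0 to ℝ using ⟨hmt, hm⟩ with m hmr
  rw [← EReal.coe_add, EReal.coe_le_coe_iff] at hle
  rw [EReal.toReal_coe, EReal.coe_le_coe_iff]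
  linarith

lemma coercive_aux {c b d a : ℝ} (hc : 0 < c) (r : ℝ) :
    ∃ R : ℝ, ∀ t : ℝ, R < t → r < c * t ^ 2 - b * t - d + a := by
  refine ⟨max 1 ((b + max 0 (r + d - a) + 1) / c), fun t ht => ?_⟩
  have h1 : (1:ℝ) < t := lt_of_le_of_lt (le_max_left _ _) ht
  have h2 : (b + max 0 (r + d - a) + 1) / c < t := lt_of_le_of_lt (le_max_right _ _) ht
  rw [div_lt_iff₀ hc] at h2
  have h3 : max 0 (r + d - a) ≥ r + d - a := le_max_right _ _
  have h4 : max 0 (r + d - a) ≥ 0 := le_max_left _ _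
  nlinarith [mul_pos hc (lt_trans one_pos h1), sq_nonneg (t - 1)]

lemma quad_diff_lower {lam lam' : ℝ} (h0 : 0 < lam) (hll : lam < lam') (x x0 y : E) :
    (1 / (2 * lam) - 1 / (2 * lam')) * ‖y‖ ^ 2 - (‖x‖ / lam + ‖x0‖ / lam') * ‖y‖
      - ‖x0‖ ^ 2 / (2 * lam')
      ≤ ‖y - x‖ ^ 2 / (2 * lam) - ‖y - x0‖ ^ 2 / (2 * lam') := by
  have hl' : 0 < lam' := lt_trans h0 hll
  have e1 : ‖y‖ ^ 2 - 2 * ‖y‖ * ‖x‖ ≤ ‖y - x‖ ^ 2 := by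
    have := real_inner_le_norm y x
    have hn : ‖y - x‖ ^ 2 = ‖y‖ ^ 2 - 2 * ⟪y, x⟫ + ‖x‖ ^ 2 := norm_sub_sq_real y x
    nlinarith [sq_nonneg ‖x‖]
  have e2 : ‖y - x0‖ ^ 2 ≤ ‖y‖ ^ 2 + 2 * ‖y‖ * ‖x0‖ + ‖x0‖ ^ 2 := by
    have := abs_real_inner_le_norm y x0
    have hn : ‖y - x0‖ ^ 2 = ‖y‖ ^ 2 - 2 * ⟪y, x0⟫ + ‖x0‖ ^ 2 := norm_sub_sq_real y x0
    nlinarith [neg_abs_le (⟪y, x0⟫ : ℝ)]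
  have A : (‖y‖ ^ 2 - 2 * ‖y‖ * ‖x‖) / (2 * lam) ≤ ‖y - x‖ ^ 2 / (2 * lam) := by gcongr
  have B : ‖y - x0‖ ^ 2 / (2 * lam') ≤ (‖y‖ ^ 2 + 2 * ‖y‖ * ‖x0‖ + ‖x0‖ ^ 2) / (2 * lam') := by
    gcongr
  have C : (1 / (2 * lam) - 1 / (2 * lam')) * ‖y‖ ^ 2 - (‖x‖ / lam + ‖x0‖ / lam') * ‖y‖
      - ‖x0‖ ^ 2 / (2 * lam')
      = (‖y‖ ^ 2 - 2 * ‖y‖ * ‖x‖) / (2 * lam)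
        - (‖y‖ ^ 2 + 2 * ‖y‖ * ‖x0‖ + ‖x0‖ ^ 2) / (2 * lam') := by
    field_simp
    ring
  linarith

lemma env_lb_and_coercive {f : E → EReal} (hbot : ∀ z, f z ≠ ⊥) {lam lam' : ℝ}
    (h0 : 0 < lam) (hll : lam < lam') {x0 : E} (hm' : moreauEnv f lam' x0 ≠ ⊥) (x : E) :
    moreauEnv f lam x ≠ ⊥ ∧
      ∀ r : ℝ, ∃ R : ℝ, ∀ y : E, R < ‖y‖ →
        (r : EReal) < f y + ((‖y - x‖ ^ 2 / (2 * lam) : ℝ) : EReal) := by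
  have hl' : 0 < lam' := lt_trans h0 hll
  set a := (moreauEnv f lam' x0).toReal with ha
  set c := 1 / (2 * lam) - 1 / (2 * lam') with hcdef
  set b := ‖x‖ / lam + ‖x0‖ / lam' with hbdef
  set d := ‖x0‖ ^ 2 / (2 * lam') with hddef
  have hc : 0 < c := by
    rw [hcdef]
    have : 1 / (2 * lam') < 1 / (2 * lam) := by
      apply one_div_lt_one_div_of_lt <;> linarith
    linarith
  have claim1 : ∀ y : E, ((a + (c * ‖y‖ ^ 2 - b * ‖y‖ - d) : ℝ) : EReal)
      ≤ f y + ((‖y - x‖ ^ 2 / (2 * lam) : ℝ) : EReal) := by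
    intro y
    have h1 := envelope_lower hbot hm' y
    have h2 : (((a - ‖y - x0‖ ^ 2 / (2 * lam') : ℝ) : EReal)
        + ((‖y - x‖ ^ 2 / (2 * lam) : ℝ) : EReal))
        ≤ f y + ((‖y - x‖ ^ 2 / (2 * lam) : ℝ) : EReal) := by gcongr
    refine le_trans ?_ h2
    rw [← EReal.coe_add, EReal.coe_le_coe_iff]
    have := quad_diff_lower h0 hll x x0 y
    linarith
  constructor
  · have hlb : ((a + (0 - b ^ 2 / (4 * c) - d) : ℝ) : EReal) ≤ moreauEnv f lam x := by
      refine le_iInf fun y => le_trans ?_ (claim1 y)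
      rw [EReal.coe_le_coe_iff]
      have h4c : (0:ℝ) < 4 * c := by linarith
      have key : b * ‖y‖ - c * ‖y‖ ^ 2 ≤ b ^ 2 / (4 * c) := by
        rw [le_div_iff₀ h4c]; nlinarith [sq_nonneg (2 * c * ‖y‖ - b)]
      linarith
    exact ((lt_of_lt_of_le (EReal.bot_lt_coe _) hlb).ne')
  · intro r
    obtain ⟨R, hR⟩ := coercive_aux (b := b) (d := d) (a := a) hc r
    refine ⟨R, fun y hy => lt_of_lt_of_le ?_ (claim1 y)⟩
    rw [EReal.coe_lt_coe_iff]
    have := hR ‖y‖ hy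
    linarith

lemma env_ne_top {f : E → EReal} (hproper : IsProperFn f) (lam : ℝ) (x : E) :
    moreauEnv f lam x ≠ ⊤ := by
  obtain ⟨y0, hy0⟩ := hproper.1
  intro h
  have hle := moreauEnv_le f lam x y0
  rw [h, top_le_iff] at hle
  exact absurd hle (EReal.add_lt_top hy0 (EReal.coe_ne_top _)).ne

lemma phi_lsc {f : E → EReal} (hlsc : LowerSemicontinuous f) (lam : ℝ) (x : E) :
    LowerSemicontinuous (fun y => f y + ((‖y - x‖ ^ 2 / (2 * lam) : ℝ) : EReal)) := by
  have hq : Continuous fun y : E => ((‖y - x‖ ^ 2 / (2 * lam) : ℝ) : EReal) := by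
    apply continuous_coe_real_ereal.comp
    fun_prop
  refine hlsc.add' hq.lowerSemicontinuous fun y => ?_
  exact EReal.continuousAt_add (Or.inr (EReal.coe_ne_bot _)) (Or.inr (EReal.coe_ne_top _))

lemma lsc_min_on_compact {s : Set E} (hs : IsCompact s) (hne : s.Nonempty)
    {φ : E → EReal} (hφ : LowerSemicontinuous φ) : ∃ p ∈ s, ∀ y ∈ s, φ p ≤ φ y := by
  haveI : Nonempty s := hne.to_subtype
  set t : s → Set E := fun i => s ∩ φ ⁻¹' Iic (φ i) with ht
  have htd : Directed (· ⊇ ·) t := by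
    intro i j
    rcases le_total (φ i) (φ j) with h | h
    · exact ⟨i, fun z hz => hz, fun z hz => ⟨hz.1, Set.mem_preimage.mpr
        (mem_Iic.mpr (le_trans (mem_Iic.mp hz.2) h))⟩⟩
    · exact ⟨j, fun z hz => ⟨hz.1, Set.mem_preimage.mpr
        (mem_Iic.mpr (le_trans (mem_Iic.mp hz.2) h))⟩, fun z hz => hz⟩
  have htn : ∀ i, (t i).Nonempty :=
    fun i => ⟨i, i.2, Set.mem_preimage.mpr (mem_Iic.mpr le_rfl)⟩
  have htcl : ∀ i, IsClosed (t i) := fun i => hs.isClosed.inter (hφ.isClosed_preimage _)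
  have htc : ∀ i, IsCompact (t i) := fun i => hs.inter_right (hφ.isClosed_preimage _)
  obtain ⟨p, hp⟩ := IsCompact.nonempty_iInter_of_directed_nonempty_isCompact_isClosed
    t htd htn htc htcl
  simp only [Set.mem_iInter] at hp
  refine ⟨p, (hp (Classical.arbitrary s)).1, fun y hy => (hp ⟨y, hy⟩).2⟩

lemma exists_prox [ProperSpace E] {f : E → EReal} (hlsc : LowerSemicontinuous f)
    (hbot : ∀ z, f z ≠ ⊥) {lam : ℝ} (h0 : 0 < lam) (x : E)
    (hnb : moreauEnv f lam x ≠ ⊥) (hnt : moreauEnv f lam x ≠ ⊤)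
    (hcoer : ∀ r : ℝ, ∃ R : ℝ, ∀ y : E, R < ‖y‖ →
      (r : EReal) < f y + ((‖y - x‖ ^ 2 / (2 * lam) : ℝ) : EReal)) :
    ∃ p, p ∈ proxPts f lam x ∧
      f p + ((‖p - x‖ ^ 2 / (2 * lam) : ℝ) : EReal) = moreauEnv f lam x ∧
      f p ≠ ⊤ ∧ f p ≠ ⊥ := by
  set φ : E → EReal := fun y => f y + ((‖y - x‖ ^ 2 / (2 * lam) : ℝ) : EReal) with hφdef
  set m := moreauEnv f lam x with hm
  set r : ℝ := m.toReal + 1 with hr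
  have hmr : m = ((m.toReal : ℝ) : EReal) := (EReal.coe_toReal hnt hnb).symm
  have hmltr : m < (r : EReal) := by
    rw [hmr, hr, EReal.coe_lt_coe_iff]; linarith
  have h1 : ∃ y1, φ y1 < (r : EReal) := by
    have : ⨅ y, φ y < (r : EReal) := hmltr
    exact iInf_lt_iff.mp this
  obtain ⟨y1, hy1⟩ := h1
  obtain ⟨R, hR⟩ := hcoer r
  set s := Metric.closedBall (0 : E) (max R ‖y1‖) with hs
  have hy1s : y1 ∈ s := by
    simp [hs, Metric.mem_closedBall, dist_zero_right, le_max_right]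
  obtain ⟨p, hps, hpmin⟩ := lsc_min_on_compact (isCompact_closedBall _ _)
    ⟨y1, hy1s⟩ (phi_lsc hlsc lam x)
  have hglobal : ∀ y, φ p ≤ φ y := by
    intro y
    by_cases hys : y ∈ s
    · exact hpmin y hys
    · have hy : max R ‖y1‖ < ‖y‖ := by
        simp only [hs, Metric.mem_closedBall, dist_zero_right, not_le] at hys
        exact hys
      have := hR y (lt_of_le_of_lt (le_max_left _ _) hy)
      exact le_of_lt (lt_trans (lt_of_le_of_lt (hpmin y1 hy1s) hy1) this)
  have hattain : φ p = m := by
    refine le_antisymm (le_iInf hglobal) (iInf_le _ p)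
  have hfpt : f p ≠ ⊤ := by
    intro h
    rw [hφdef] at hattain
    simp only [h] at hattain
    rw [EReal.top_add_of_ne_bot (EReal.coe_ne_bot _)] at hattain
    exact hnt hattain.symm
  exact ⟨p, hglobal, hattain, hfpt, hbot p⟩

lemma fsubd_mem_lsubd {f : E → EReal} {p v : E} (h : v ∈ fsubd f p) : v ∈ lsubd f p :=
  ⟨fun _ => p, fun _ => v, tendsto_const_nhds, tendsto_const_nhds, tendsto_const_nhds,
    fun _ => h⟩

lemma norm_id_aux {lam : ℝ} (h0 : 0 < lam) (y p z : E) :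
    (‖p - y‖ ^ 2 - ‖z - y‖ ^ 2) / (2 * lam)
      = ⟪lam⁻¹ • (y - p), z - p⟫ - ‖z - p‖ ^ 2 / (2 * lam) := by
  have hz : ‖z - y‖ ^ 2 = ‖z - p‖ ^ 2 - 2 * ⟪z - p, y - p⟫ + ‖y - p‖ ^ 2 := by
    have : z - y = (z - p) - (y - p) := by abel
    rw [this, norm_sub_sq_real]
  have hpy : ‖p - y‖ = ‖y - p‖ := norm_sub_rev _ _
  rw [real_inner_smul_left, real_inner_comm]
  rw [hpy, hz]
  field_simp
  ring

lemma prox_subgrad {f : E → EReal} (hbot : ∀ z, f z ≠ ⊥) {lam : ℝ} (h0 : 0 < lam) {y p : E}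
    (hp : p ∈ proxPts f lam y) (hfpt : f p ≠ ⊤) :
    lam⁻¹ • (y - p) ∈ fsubd f p := by
  refine ⟨hfpt, hbot p, fun ε hε => ?_⟩
  rw [Metric.eventually_nhds_iff]
  refine ⟨2 * lam * ε, by positivity, fun z hz => ?_⟩
  rcases eq_top_or_lt_top (f z) with htop | hlt
  · rw [htop]; exact le_top
  lift f z to ℝ using ⟨hlt.ne, hbot z⟩ with r hr
  lift f p to ℝ using ⟨hfpt, hbot p⟩ with c hc
  have hkey := hp z
  rw [← hr, ← hc, ← EReal.coe_add, ← EReal.coe_add, EReal.coe_le_coe_iff] at hkey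
  rw [EReal.coe_le_coe_iff, EReal.toReal_coe]
  have hid := norm_id_aux h0 y p z
  have hsmall : ‖z - p‖ ^ 2 / (2 * lam) ≤ ε * ‖z - p‖ := by
    rw [dist_eq_norm] at hz
    have h1 : 0 ≤ ‖z - p‖ := norm_nonneg _
    have : ‖z - p‖ ^ 2 ≤ (2 * lam * ε) * ‖z - p‖ := by nlinarith
    rw [div_le_iff₀ (by positivity)]
    calc ‖z - p‖ ^ 2 ≤ (2 * lam * ε) * ‖z - p‖ := this
    _ = ε * ‖z - p‖ * (2 * lam) := by ring
  have hsub : (‖p - y‖ ^ 2 - ‖z - y‖ ^ 2) / (2 * lam)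
      = ‖p - y‖ ^ 2 / (2 * lam) - ‖z - y‖ ^ 2 / (2 * lam) := sub_div _ _ _
  linarith [hkey, hsmall, hid, hsub]


lemma fsubd_env_eq {f : E → EReal} {lam : ℝ} (h0 : 0 < lam) {y v p : E}
    (hv : v ∈ fsubd (moreauEnv f lam) y)
    (hattain : f p + ((‖p - y‖ ^ 2 / (2 * lam) : ℝ) : EReal) = moreauEnv f lam y)
    (hfpt : f p ≠ ⊤) (hfpb : f p ≠ ⊥) :
    v = lam⁻¹ • (y - p) := by
  obtain ⟨hgt, hgb, hineq⟩ := hv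
  lift f p to ℝ using ⟨hfpt, hfpb⟩ with c hc
  have hG : (moreauEnv f lam y).toReal = c + ‖p - y‖ ^ 2 / (2 * lam) := by
    rw [← hattain, ← EReal.coe_add, EReal.toReal_coe]
  set u := v - lam⁻¹ • (y - p) with hu
  suffices hnu : ‖u‖ ^ 2 ≤ 0 by
    have : ‖u‖ = 0 := by nlinarith [norm_nonneg u]
    have : u = 0 := norm_eq_zero.mp this
    rw [hu, sub_eq_zero] at this
    exact this
  by_contra hpos
  push_neg at hpos
  -- key estimate: for all ε > 0, ‖u‖^2 ≤ ε * (‖u‖ + 1)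
  have key : ∀ ε : ℝ, 0 < ε → ‖u‖ ^ 2 ≤ ε * (‖u‖ + 1) := by
    intro ε hε
    obtain ⟨δ, hδ, hball⟩ := Metric.eventually_nhds_iff.mp (hineq ε hε)
    -- choose t
    set t : ℝ := min (δ / (2 * (‖u‖ + 1))) (2 * lam * ε / (‖u‖ ^ 2 + 1)) with htdef
    have hupos : (0:ℝ) < ‖u‖ + 1 := by positivity
    have ht : 0 < t := by
      apply lt_min <;> positivity
    set z := y + t • u with hz
    have hzy : z - y = t • u := by rw [hz]; abel
    have hdist : dist z y < δ := by
      rw [dist_eq_norm, hzy, norm_smul, Real.norm_eq_abs, abs_of_pos ht]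
      have h1 : t ≤ δ / (2 * (‖u‖ + 1)) := min_le_left _ _
      have h2 : ‖u‖ < ‖u‖ + 1 := by linarith
      calc t * ‖u‖ ≤ δ / (2 * (‖u‖ + 1)) * ‖u‖ := by
            apply mul_le_mul_of_nonneg_right h1 (norm_nonneg _)
        _ < δ := by
            rw [div_mul_eq_mul_div, div_lt_iff₀ (by positivity)]
            nlinarith [norm_nonneg u, hδ]
    have hineqz := hball hdist
    -- upper bound for envelope at z
    have hup : moreauEnv f lam z ≤ ((c + ‖p - z‖ ^ 2 / (2 * lam) : ℝ) : EReal) := by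
      have := moreauEnv_le f lam z p
      rwa [← hc, ← EReal.coe_add] at this
    have hreal : (moreauEnv f lam y).toReal + ⟪v, z - y⟫ - ε * ‖z - y‖
        ≤ c + ‖p - z‖ ^ 2 / (2 * lam) :=
      EReal.coe_le_coe_iff.mp (le_trans hineqz hup)
    rw [hG, hzy] at hreal
    have hpz : ‖p - z‖ ^ 2 = ‖p - y‖ ^ 2 - 2 * (t * ⟪p - y, u⟫) + t ^ 2 * ‖u‖ ^ 2 := by
      have : p - z = (p - y) - t • u := by rw [hz]; abel
      rw [this, norm_sub_sq_real, real_inner_smul_right, norm_smul, Real.norm_eq_abs,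
        abs_of_pos ht, mul_pow]
    rw [real_inner_smul_right, norm_smul, Real.norm_eq_abs, abs_of_pos ht] at hreal
    -- divide by t
    have h2l : (0:ℝ) < 2 * lam := by positivity
    have expand : (‖p - y‖ ^ 2 - 2 * (t * ⟪p - y, u⟫) + t ^ 2 * ‖u‖ ^ 2) / (2 * lam)
        = ‖p - y‖ ^ 2 / (2 * lam) - t * ⟪p - y, u⟫ / lam + t ^ 2 * ‖u‖ ^ 2 / (2 * lam) := by
      field_simp
    rw [hpz, expand] at hreal
    have hdiv : ⟪v, u⟫ - ε * ‖u‖ ≤ -(⟪p - y, u⟫ / lam) + t * ‖u‖ ^ 2 / (2 * lam) := by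
      have h' : t * (⟪v, u⟫ - ε * ‖u‖)
          ≤ t * (-(⟪p - y, u⟫ / lam) + t * ‖u‖ ^ 2 / (2 * lam)) := by
        have e1 : t * (⟪v, u⟫ - ε * ‖u‖) = t * ⟪v, u⟫ - ε * (t * ‖u‖) := by ring
        have e2 : t * (-(⟪p - y, u⟫ / lam) + t * ‖u‖ ^ 2 / (2 * lam))
            = -(t * ⟪p - y, u⟫ / lam) + t ^ 2 * ‖u‖ ^ 2 / (2 * lam) := by
          field_simp
        rw [e1, e2]
        linarith [hreal]
      exact le_of_mul_le_mul_left h' ht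
    have hiu : ⟪u, u⟫ = ⟪v, u⟫ + ⟪p - y, u⟫ / lam := by
      rw [hu, inner_sub_left, real_inner_smul_left, ← neg_sub p y, inner_neg_left]
      field_simp
      ring
    have hnormu : ⟪u, u⟫ = ‖u‖ ^ 2 := real_inner_self_eq_norm_sq u
    have hta : t * ‖u‖ ^ 2 / (2 * lam) ≤ ε := by
      have h1 : t ≤ 2 * lam * ε / (‖u‖ ^ 2 + 1) := min_le_right _ _
      rw [le_div_iff₀ (by positivity)] at h1
      rw [div_le_iff₀ h2l]
      nlinarith [norm_nonneg u, ht.le]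
    nlinarith [hdiv, hiu, hnormu, hta, norm_nonneg u, hε]
  -- conclude
  have := key (‖u‖ ^ 2 / (2 * (‖u‖ + 1))) (by positivity)
  have hupos : (0:ℝ) < ‖u‖ + 1 := by positivity
  rw [div_mul_eq_mul_div, mul_comm] at this
  have heq : (‖u‖ + 1) * ‖u‖ ^ 2 / (2 * (‖u‖ + 1)) = ‖u‖ ^ 2 / 2 := by
    field_simp
  rw [heq] at this
  linarith

/-- Package: every Fréchet subgradient of the envelope determines the prox point. -/
lemma fsubd_env_package [ProperSpace E] {f : E → EReal} (hproper : IsProperFn f)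
    (hlsc : LowerSemicontinuous f) {lam lam' : ℝ} (h0 : 0 < lam) (hll : lam < lam')
    {x0 : E} (hm' : moreauEnv f lam' x0 ≠ ⊥) {y v : E}
    (hv : v ∈ fsubd (moreauEnv f lam) y) :
    (y - lam • v) ∈ proxPts f lam y ∧
      f (y - lam • v) + ((‖(y - lam • v) - y‖ ^ 2 / (2 * lam) : ℝ) : EReal)
        = moreauEnv f lam y ∧
      f (y - lam • v) ≠ ⊤ ∧ f (y - lam • v) ≠ ⊥ ∧ v ∈ fsubd f (y - lam • v) := by
  have hbot := hproper.2
  obtain ⟨hnb, hcoer⟩ := env_lb_and_coercive hbot h0 hll hm' y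
  obtain ⟨p, hp, hatt, hpt, hpb⟩ := exists_prox hlsc hbot h0 y hnb
    (env_ne_top hproper lam y) hcoer
  have hveq : v = lam⁻¹ • (y - p) := fsubd_env_eq h0 hv hatt hpt hpb
  have hpeq : p = y - lam • v := by
    rw [hveq, smul_smul, mul_inv_cancel₀ (ne_of_gt h0), one_smul]
    abel
  rw [← hpeq]
  refine ⟨hp, hatt, hpt, hpb, ?_⟩
  rw [hveq]
  exact prox_subgrad hbot h0 hp hpt

/-- At a critical point of the envelope, the envelope agrees with `f`. -/
lemma env_eq_at_crit [ProperSpace E] {f : E → EReal} (hproper : IsProperFn f)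
    (hlsc : LowerSemicontinuous f) {lam lam' : ℝ} (h0 : 0 < lam) (hll : lam < lam')
    {x0 : E} (hm' : moreauEnv f lam' x0 ≠ ⊥) {xb : E}
    (hcrit : (0 : E) ∈ lsubd (moreauEnv f lam) xb) :
    moreauEnv f lam xb = f xb := by
  have hbot := hproper.2
  refine le_antisymm (moreauEnv_le_self f h0 xb) ?_
  by_contra hlt
  push_neg at hlt
  obtain ⟨cm, hcm1, hcm2⟩ := EReal.exists_between_coe_real hlt
  obtain ⟨xs, vs, hxs, hgxs, hvs, hfs⟩ := hcrit
  set p : ℕ → E := fun k => xs k - lam • vs k with hpdef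
  have hptend : Tendsto p atTop (𝓝 xb) := by
    have : Tendsto (fun k => xs k - lam • vs k) atTop (𝓝 (xb - lam • 0)) :=
      hxs.sub ((hvs.const_smul lam))
    simpa using this
  -- each p k has value g(xs k) minus the quadratic
  have hval : ∀ k, f (p k) + ((‖p k - xs k‖ ^ 2 / (2 * lam) : ℝ) : EReal)
      = moreauEnv f lam (xs k) := fun k =>
    (fsubd_env_package hproper hlsc h0 hll hm' (hfs k)).2.1
  have hnbk : ∀ k, f (p k) ≠ ⊥ := fun k => hbot _
  have hntk : ∀ k, f (p k) ≠ ⊤ := fun k =>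
    (fsubd_env_package hproper hlsc h0 hll hm' (hfs k)).2.2.1
  have hgb : moreauEnv f lam xb ≠ ⊥ := by
    obtain ⟨hnb, _⟩ := env_lb_and_coercive hbot h0 hll hm' xb
    exact hnb
  have hgt : moreauEnv f lam xb ≠ ⊤ := env_ne_top hproper lam xb
  -- toReal convergence of envelope values
  have htR : Tendsto (fun k => (moreauEnv f lam (xs k)).toReal) atTop
      (𝓝 ((moreauEnv f lam xb).toReal)) :=
    (EReal.tendsto_toReal hgt hgb).comp hgxs
  -- quadratic term tends to 0
  have hquad : Tendsto (fun k => ‖p k - xs k‖ ^ 2 / (2 * lam)) atTop (𝓝 0) := by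
    have h1 : Tendsto (fun k => ‖p k - xs k‖) atTop (𝓝 0) := by
      have : ∀ k, ‖p k - xs k‖ = lam * ‖vs k‖ := by
        intro k
        rw [hpdef]
        simp only [sub_sub_cancel_left, norm_neg, norm_smul, Real.norm_eq_abs,
          abs_of_pos h0]
      simp only [this]
      have := (hvs.norm).const_mul lam
      simpa using this
    have : Tendsto (fun k => ‖p k - xs k‖ ^ 2 / (2 * lam)) atTop (𝓝 (0 ^ 2 / (2 * lam))) :=
      (h1.pow 2).div_const _
    simpa using this
  -- real values of f (p k)
  have hfval : ∀ k, f (p k) = (((moreauEnv f lam (xs k)).toReal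
      - ‖p k - xs k‖ ^ 2 / (2 * lam) : ℝ) : EReal) := by
    intro k
    have h1 := hval k
    have h2 : moreauEnv f lam (xs k) ≠ ⊤ := env_ne_top hproper lam _
    have h3 : moreauEnv f lam (xs k) ≠ ⊥ := (env_lb_and_coercive hbot h0 hll hm' _).1
    lift f (p k) to ℝ using ⟨hntk k, hnbk k⟩ with c hc
    lift moreauEnv f lam (xs k) to ℝ using ⟨h2, h3⟩ with m hm
    rw [← EReal.coe_add, EReal.coe_eq_coe_iff] at h1
    rw [EReal.toReal_coe, EReal.coe_eq_coe_iff]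
    linarith
  have hflim : Tendsto (fun k => (moreauEnv f lam (xs k)).toReal
      - ‖p k - xs k‖ ^ 2 / (2 * lam)) atTop (𝓝 ((moreauEnv f lam xb).toReal)) := by
    have := htR.sub hquad
    simpa using this
  -- lower semicontinuity contradiction
  have hev1 : ∀ᶠ z in 𝓝 xb, (cm : EReal) < f z := hlsc xb (cm : EReal) hcm2
  have hev2 : ∀ᶠ k in atTop, (cm : EReal) < f (p k) := hptend.eventually hev1
  have hcmgt : (moreauEnv f lam xb).toReal < cm := by
    rw [← EReal.coe_toReal hgt hgb, EReal.coe_lt_coe_iff] at hcm1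
    exact hcm1
  have hev3 : ∀ᶠ k in atTop, (moreauEnv f lam (xs k)).toReal
      - ‖p k - xs k‖ ^ 2 / (2 * lam) < cm :=
    hflim.eventually (Filter.Tendsto.eventually_lt_const hcmgt tendsto_id)
  obtain ⟨k, h1, h2⟩ := (hev2.and hev3).exists
  rw [hfval k, EReal.coe_lt_coe_iff] at h1
  linarith

/-- The key scalar inequality. -/
lemma key_real_ineq {lam γ μ s : ℝ} (hlam : 0 < lam) (hγ : 0 < γ) (hμ : 0 < μ)
    (hs : 0 ≤ s) (hs1 : lam * s ≤ 1) :
    (lam * s + (μ * s) ^ (1 / γ)) ^ (max 1 γ)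
      ≤ lam * (1 + (μ / lam) ^ (1 / γ)) ^ (max 1 γ) * s := by
  set γ' := max 1 γ with hγ'
  have hγ'1 : 1 ≤ γ' := le_max_left _ _
  have hγ'γ : γ ≤ γ' := le_max_right _ _
  have hγ'0 : 0 < γ' := lt_of_lt_of_le one_pos hγ'1
  rcases eq_or_lt_of_le hs with hs0 | hs0
  · rw [← hs0, mul_zero, mul_zero, mul_zero, zero_add,
      Real.zero_rpow (by positivity : (0:ℝ) < 1 / γ).ne', Real.zero_rpow hγ'0.ne']
  have hls : 0 < lam * s := by positivity
  have key : lam * s + (μ * s) ^ (1 / γ)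
      ≤ (lam * s) ^ (1 / γ') * (1 + (μ / lam) ^ (1 / γ)) := by
    have hA : lam * s ≤ (lam * s) ^ (1 / γ') := by
      rcases eq_or_lt_of_le hγ'1 with h1 | h1
      · rw [← h1]; simp
      · calc lam * s = (lam * s) ^ (1 : ℝ) := (Real.rpow_one _).symm
          _ ≤ (lam * s) ^ (1 / γ') := by
            apply Real.rpow_le_rpow_of_exponent_ge hls hs1
            rw [div_le_one hγ'0]
            exact hγ'1
    have hB : (μ * s) ^ (1 / γ) = (μ / lam) ^ (1 / γ) * (lam * s) ^ (1 / γ) := by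
      have hμs : μ * s = μ / lam * (lam * s) := by field_simp
      rw [hμs, Real.mul_rpow (by positivity) hls.le]
    have hC : (lam * s) ^ (1 / γ) ≤ (lam * s) ^ (1 / γ') := by
      apply Real.rpow_le_rpow_of_exponent_ge hls hs1
      apply div_le_div_of_nonneg_left (by norm_num) hγ hγ'γ
    have hD : (μ / lam) ^ (1 / γ) * (lam * s) ^ (1 / γ)
        ≤ (μ / lam) ^ (1 / γ) * (lam * s) ^ (1 / γ') :=
      mul_le_mul_of_nonneg_left hC (by positivity)
    rw [hB]
    nlinarith [hA, hD]
  calc (lam * s + (μ * s) ^ (1 / γ)) ^ γ'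
      ≤ ((lam * s) ^ (1 / γ') * (1 + (μ / lam) ^ (1 / γ))) ^ γ' := by
        apply Real.rpow_le_rpow (by positivity) key (le_of_lt hγ'0)
    _ = lam * (1 + (μ / lam) ^ (1 / γ)) ^ γ' * s := by
        rw [Real.mul_rpow (by positivity) (by positivity)]
        rw [one_div, Real.rpow_inv_rpow (le_of_lt hls) (ne_of_gt hγ'0)]
        ring

theorem stmt10 {n : ℕ} (f : EuclideanSpace ℝ (Fin n) → EReal)
    (hproper : IsProperFn f) (hlsc : LowerSemicontinuous f) (hpb : ProxBdd f)
    (lam : ℝ) (hlam : lam ∈ Set.Ioo 0 (proxThreshold f))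
    (xb : EuclideanSpace ℝ (Fin n)) (hdom : f xb ≠ ⊤)
    (hcrit : (0 : EuclideanSpace ℝ (Fin n)) ∈ lsubd (moreauEnv f lam) xb)
    (γ μ : ℝ) (hγ : 0 < γ) (hμ : 0 < μ) (h : LSEBAt f xb γ μ) :
    LSEBAt (moreauEnv f lam) xb (max 1 γ)
      (lam * (1 + (μ / lam) ^ (1 / γ)) ^ (max 1 γ)) := by
  classical
  obtain ⟨lam', hll, hl'0, x0, hm'⟩ := exists_lam' hlam
  have h0 : 0 < lam := hlam.1
  have hbot := hproper.2
  set g := moreauEnv f lam with hgdef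
  have hgnb : ∀ x, g x ≠ ⊥ := fun x => (env_lb_and_coercive hbot h0 hll hm' x).1
  have hgnt : ∀ x, g x ≠ ⊤ := fun x => env_ne_top hproper lam x
  have hgxb : g xb = f xb := env_eq_at_crit hproper hlsc h0 hll hm' hcrit
  obtain ⟨ηf, hηf, νf, hνf, hSEB⟩ := h
  set γ' := max 1 γ with hγ'def
  have hγ'1 : (1:ℝ) ≤ γ' := le_max_left _ _
  have hγ'0 : (0:ℝ) < γ' := lt_of_lt_of_le one_pos hγ'1
  set μ' := lam * (1 + (μ / lam) ^ (1 / γ)) ^ γ' with hμ'def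
  have hμ'pos : 0 < μ' := by
    apply mul_pos h0
    apply Real.rpow_pos_of_pos
    positivity
  have hμ'lam : lam ≤ μ' := by
    rw [hμ'def]
    nth_rewrite 1 [← mul_one lam]
    apply mul_le_mul_of_nonneg_left _ h0.le
    apply Real.one_le_rpow _ hγ'0.le
    have : (0:ℝ) ≤ (μ / lam) ^ (1 / γ) := by positivity
    linarith
  set δ := min (1 / lam) (ηf / (2 * lam)) with hδdef
  have hδ0 : 0 < δ := lt_min (by positivity) (by positivity)
  set η := min (min 1 (ηf / 2)) ((μ' * δ) ^ (1 / γ')) with hηdef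
  have hη0 : 0 < η := lt_min (lt_min one_pos (by positivity)) (by positivity)
  refine ⟨η, hη0, νf, hνf, fun x hx hlow hupp => ?_⟩
  -- the sublevel set of g
  set S := slev g (g xb) with hSdef
  have hxbS : xb ∈ S := le_refl (g xb)
  have hslev_sub : slev f (f xb) ⊆ S := by
    intro z hz
    have : g z ≤ f z := moreauEnv_le_self f h0 z
    exact le_trans (le_trans this hz) (le_of_eq hgxb.symm)
  -- main bound for each limiting subgradient of g at x
  have main : ∀ v ∈ lsubd g x,
      EMetric.infEdist x S ^ γ' ≤ ENNReal.ofReal μ' * edist 0 v := by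
    intro v hv
    have hedist : edist 0 v = ENNReal.ofReal ‖v‖ := by
      rw [edist_dist, dist_zero_left]
    rcases le_or_gt δ ‖v‖ with hcase | hcase
    · -- large subgradient: trivial bound via distance to xb
      have h1 : EMetric.infEdist x S ≤ ENNReal.ofReal η := by
        refine le_trans (EMetric.infEdist_le_edist_of_mem hxbS) ?_
        rw [edist_dist]
        exact ENNReal.ofReal_le_ofReal (le_of_lt (Metric.mem_ball.mp hx))
      have h2 : EMetric.infEdist x S ^ γ' ≤ ENNReal.ofReal (η ^ γ') := by
        rw [← ENNReal.ofReal_rpow_of_nonneg hη0.le hγ'0.le]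
        exact ENNReal.rpow_le_rpow h1 hγ'0.le
      refine le_trans h2 ?_
      rw [hedist, ← ENNReal.ofReal_mul hμ'pos.le]
      apply ENNReal.ofReal_le_ofReal
      have hηle : η ≤ (μ' * δ) ^ (1 / γ') := min_le_right _ _
      have h3 : η ^ γ' ≤ ((μ' * δ) ^ (1 / γ')) ^ γ' :=
        Real.rpow_le_rpow hη0.le hηle hγ'0.le
      rw [one_div, Real.rpow_inv_rpow (by positivity) hγ'0.ne'] at h3
      have h4 : μ' * δ ≤ μ' * ‖v‖ := mul_le_mul_of_nonneg_left hcase hμ'pos.le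
      linarith
    · -- small subgradient: the serious estimate
      obtain ⟨xs, vs, hxs, hgs, hvs, hfs⟩ := hv
      -- eventual properties
      have E1 : ∀ᶠ k in atTop, ‖vs k‖ < δ := (hvs.norm).eventually_lt_const hcase
      have E2 : ∀ᶠ k in atTop, xs k ∈ Metric.ball xb η :=
        hxs.eventually_mem (Metric.isOpen_ball.mem_nhds hx)
      have E3 : ∀ᶠ k in atTop, g (xs k) ∈ Set.Ioo (g xb) (g xb + (νf : EReal)) :=
        hgs.eventually_mem (isOpen_Ioo.mem_nhds ⟨hlow, hupp⟩)
      have Ek : ∀ᶠ k in atTop, EMetric.infEdist (xs k) S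
          ≤ ENNReal.ofReal (lam * ‖vs k‖ + (μ * ‖vs k‖) ^ (1 / γ)) := by
        filter_upwards [E1, E2, E3] with k hk1 hk2 hk3
        set p := xs k - lam • vs k with hpdef
        obtain ⟨hprox, hatt, hpt, hpb', hvfp⟩ :=
          fsubd_env_package hproper hlsc h0 hll hm' (hfs k)
        have hdistp : dist (xs k) p = lam * ‖vs k‖ := by
          rw [hpdef, dist_eq_norm]
          simp only [sub_sub_cancel, norm_smul, Real.norm_eq_abs, abs_of_pos h0]
        have hedistp : edist (xs k) p = ENNReal.ofReal (lam * ‖vs k‖) := by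
          rw [edist_dist, hdistp]
        have hrpow_nonneg : (0:ℝ) ≤ (μ * ‖vs k‖) ^ (1 / γ) := by positivity
        by_cases hc : f p ≤ f xb
        · -- prox point already in the sublevel set
          have hpS : p ∈ S := by
            have : g p ≤ f p := moreauEnv_le_self f h0 p
            exact le_trans (le_trans this hc) (le_of_eq hgxb.symm)
          refine le_trans (EMetric.infEdist_le_edist_of_mem hpS) ?_
          rw [hedistp]
          apply ENNReal.ofReal_le_ofReal
          nlinarith [norm_nonneg (vs k)]
        · push_neg at hc
          -- apply the LSEB of f at p
          have hpball : p ∈ Metric.ball xb ηf := by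
            rw [Metric.mem_ball]
            have t1 : dist p xb ≤ dist p (xs k) + dist (xs k) xb := dist_triangle _ _ _
            have t2 : dist p (xs k) = lam * ‖vs k‖ := by rw [dist_comm]; exact hdistp
            have t3 : lam * ‖vs k‖ < lam * δ := by
              apply mul_lt_mul_of_pos_left hk1 h0
            have t4 : lam * δ ≤ ηf / 2 := by
              have : δ ≤ ηf / (2 * lam) := min_le_right _ _
              calc lam * δ ≤ lam * (ηf / (2 * lam)) :=
                    mul_le_mul_of_nonneg_left this h0.le
                _ = ηf / 2 := by field_simp
            have t5 : dist (xs k) xb < η := Metric.mem_ball.mp hk2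
            have t6 : η ≤ ηf / 2 := le_trans (min_le_left _ _) (min_le_right _ _)
            linarith
          have hfplt : f p < f xb + (νf : EReal) := by
            have t1 : f p ≤ g (xs k) := by
              rw [hgdef, ← hatt]
              exact le_add_quad f h0 (xs k) p
            have t2 : g (xs k) < g xb + (νf : EReal) := hk3.2
            rw [hgxb] at t2
            exact lt_of_le_of_lt t1 t2
          have hap := hSEB p hpball hc hfplt
          have hsd : subdist f p ≤ ENNReal.ofReal ‖vs k‖ := by
            have : edist 0 (vs k) = ENNReal.ofReal ‖vs k‖ := by
              rw [edist_dist, dist_zero_left]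
            rw [← this]
            exact EMetric.infEdist_le_edist_of_mem (fsubd_mem_lsubd hvfp)
          have hap2 : EMetric.infEdist p (slev f (f xb)) ^ γ
              ≤ ENNReal.ofReal (μ * ‖vs k‖) := by
            rw [ENNReal.ofReal_mul hμ.le]
            exact le_trans hap (mul_le_mul_right hsd _)
          have hap3 : EMetric.infEdist p (slev f (f xb))
              ≤ ENNReal.ofReal ((μ * ‖vs k‖) ^ (1 / γ)) := by
            have h5 := ENNReal.rpow_le_rpow hap2 (by positivity : (0:ℝ) ≤ 1 / γ)
            rw [one_div, ENNReal.rpow_rpow_inv hγ.ne',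
              ENNReal.ofReal_rpow_of_nonneg (by positivity) (by positivity)] at h5
            rw [one_div]
            exact h5
          have hap4 : EMetric.infEdist p S
              ≤ ENNReal.ofReal ((μ * ‖vs k‖) ^ (1 / γ)) :=
            le_trans (EMetric.infEdist_anti hslev_sub) hap3
          calc EMetric.infEdist (xs k) S ≤ edist (xs k) p + EMetric.infEdist p S :=
                EMetric.infEdist_le_edist_add_infEdist
            _ ≤ ENNReal.ofReal (lam * ‖vs k‖) + ENNReal.ofReal ((μ * ‖vs k‖) ^ (1 / γ)) := by
                rw [hedistp]
                exact add_le_add_right hap4 _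
            _ = ENNReal.ofReal (lam * ‖vs k‖ + (μ * ‖vs k‖) ^ (1 / γ)) :=
                (ENNReal.ofReal_add (by positivity) hrpow_nonneg).symm
      -- pass to the limit
      have hbound : EMetric.infEdist x S
          ≤ ENNReal.ofReal (lam * ‖v‖ + (μ * ‖v‖) ^ (1 / γ)) := by
        have hdist0 : Tendsto (fun k => dist x (xs k)) atTop (𝓝 0) := by
          have := tendsto_iff_dist_tendsto_zero.mp hxs
          simpa [dist_comm] using this
        have hreal : Tendsto (fun k => lam * ‖vs k‖ + (μ * ‖vs k‖) ^ (1 / γ)) atTop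
            (𝓝 (lam * ‖v‖ + (μ * ‖v‖) ^ (1 / γ))) := by
          have hn : Tendsto (fun k => ‖vs k‖) atTop (𝓝 ‖v‖) := hvs.norm
          have h1 : Tendsto (fun k => lam * ‖vs k‖) atTop (𝓝 (lam * ‖v‖)) :=
            hn.const_mul lam
          have h2 : Tendsto (fun k => (μ * ‖vs k‖) ^ (1 / γ)) atTop
              (𝓝 ((μ * ‖v‖) ^ (1 / γ))) := by
            have hμn : Tendsto (fun k => μ * ‖vs k‖) atTop (𝓝 (μ * ‖v‖)) :=
              hn.const_mul μ
            exact (Real.continuousAt_rpow_const _ _ (Or.inr (by positivity))).tendsto.comp hμn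
          exact h1.add h2
        have hlim : Tendsto (fun k => edist x (xs k)
            + ENNReal.ofReal (lam * ‖vs k‖ + (μ * ‖vs k‖) ^ (1 / γ))) atTop
            (𝓝 (0 + ENNReal.ofReal (lam * ‖v‖ + (μ * ‖v‖) ^ (1 / γ)))) := by
          apply Filter.Tendsto.add
          · have : Tendsto (fun k => ENNReal.ofReal (dist x (xs k))) atTop
                (𝓝 (ENNReal.ofReal 0)) :=
              (ENNReal.continuous_ofReal.tendsto _).comp hdist0
            simpa [edist_dist] using this
          · exact (ENNReal.continuous_ofReal.tendsto _).comp hreal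
        rw [zero_add] at hlim
        refine ge_of_tendsto hlim ?_
        filter_upwards [Ek] with k hk
        exact le_trans EMetric.infEdist_le_edist_add_infEdist (add_le_add_right hk _)
      -- final scalar computation
      have hs1 : lam * ‖v‖ ≤ 1 := by
        have : ‖v‖ ≤ 1 / lam := le_of_lt (lt_of_lt_of_le hcase (min_le_left _ _))
        calc lam * ‖v‖ ≤ lam * (1 / lam) := mul_le_mul_of_nonneg_left this h0.le
          _ = 1 := by field_simp
      have hkey := key_real_ineq h0 hγ hμ (norm_nonneg v) hs1
      calc EMetric.infEdist x S ^ γ'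
          ≤ (ENNReal.ofReal (lam * ‖v‖ + (μ * ‖v‖) ^ (1 / γ))) ^ γ' :=
            ENNReal.rpow_le_rpow hbound hγ'0.le
        _ = ENNReal.ofReal ((lam * ‖v‖ + (μ * ‖v‖) ^ (1 / γ)) ^ γ') :=
            ENNReal.ofReal_rpow_of_nonneg (by positivity) hγ'0.le
        _ ≤ ENNReal.ofReal (μ' * ‖v‖) := ENNReal.ofReal_le_ofReal hkey
        _ = ENNReal.ofReal μ' * edist 0 v := by
            rw [hedist, ← ENNReal.ofReal_mul hμ'pos.le]
  -- conclude from the pointwise bound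
  have hrw : ENNReal.ofReal μ' * subdist g x
      = ⨅ v ∈ lsubd g x, ENNReal.ofReal μ' * edist 0 v := by
    rw [subdist, EMetric.infEdist, Metric.infEDist]
    rw [ENNReal.mul_iInf_of_ne (by simp [hμ'pos]) ENNReal.ofReal_ne_top]
    congr 1
    funext v
    rw [ENNReal.mul_iInf_of_ne (by simp [hμ'pos]) ENNReal.ofReal_ne_top]
  rw [hrw]
  exact le_iInf₂ main

end
end

section
/- Let f : ℝⁿ → ℝ ∪ {∞} be proper, lower semicontinuous and prox-bounded with threshold λ_f, λ ∈ (0, λ_f), and x̄ ∈ dom f with 0 ∈ ∂(e_λ f)(x̄). Assume (a) f satisfies the local Hölder error bound at x̄ with exponent γ > 0 and constant μ ≥ 2λ, and (b) there exists ε̄ > 0 such that for every x ∈ B(x̄, ε̄) with f(x) > f(x̄) there exists y ∈ P_λ f(x) with f(y) ≥ f(x̄). Then the Moreau envelope e_λ f satisfies the local Hölder error bound at x̄ with exponent max{2, γ} and constant 2^{max{1, γ-1}} μ. -/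
open Filter Topology Set
open scoped ENNReal NNReal RealInnerProductSpace

noncomputable section

variable {E : Type*} [NormedAddCommGroup E] [InnerProductSpace ℝ E]

section AuxLemmas

set_option linter.unusedSectionVars false

lemma ennreal_add_rpow {a b : ℝ≥0∞} {s : ℝ} (hs : 1 ≤ s) :
    (a + b) ^ s ≤ 2 ^ (s - 1) * (a ^ s + b ^ s) := by
  have h := ENNReal.rpow_arith_mean_le_arith_mean2_rpow 2⁻¹ 2⁻¹ a b
    (by rw [ENNReal.inv_two_add_inv_two]) hs
  have hs0 : (0:ℝ) ≤ s := le_trans zero_le_one hs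
  have h1 : (2⁻¹ : ℝ≥0∞) * a + 2⁻¹ * b = 2⁻¹ * (a + b) := by ring
  rw [h1, ENNReal.mul_rpow_of_nonneg _ _ hs0] at h
  calc (a + b) ^ s = 2 ^ s * ((2⁻¹:ℝ≥0∞) ^ s * (a+b) ^ s) := by
        rw [← mul_assoc, ← ENNReal.mul_rpow_of_nonneg _ _ hs0]
        rw [ENNReal.mul_inv_cancel (by norm_num) (by norm_num), ENNReal.one_rpow, one_mul]
    _ ≤ 2 ^ s * (2⁻¹ * a ^ s + 2⁻¹ * b ^ s) := mul_le_mul_right h _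
    _ = (2 ^ s * 2⁻¹) * (a ^ s + b ^ s) := by ring
    _ = 2 ^ (s - 1) * (a ^ s + b ^ s) := by
        congr 1
        rw [show s - 1 = s + (-1) by ring,
          ENNReal.rpow_add _ _ (by norm_num) (by norm_num), ENNReal.rpow_neg_one]

lemma moreau_le (f : E → EReal) (lam : ℝ) (x z : E) :
    moreauEnv f lam x ≤ f z + ((‖z - x‖ ^ 2 / (2 * lam) : ℝ) : EReal) := iInf_le _ z

lemma moreau_le_self (f : E → EReal) (lam : ℝ) (x : E) :
    moreauEnv f lam x ≤ f x := by
  have := moreau_le f lam x x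
  simpa using this

lemma prox_approx {f : E → EReal} (hbot : ∀ z, f z ≠ ⊥) {lam : ℝ} (hlam : 0 < lam)
    {x v : E} (hv : v ∈ fsubd (moreauEnv f lam) x) {δ : ℝ} (hδ : 0 < δ) :
    ∃ p, f p ≤ moreauEnv f lam x + (δ : EReal) ∧
      ‖p - x‖ ≤ lam * ‖v‖ + δ * (2 * lam + 1) := by
  obtain ⟨hetop, hebot, hsub⟩ := hv
  set Ex : ℝ := (moreauEnv f lam x).toReal with hEx
  have hEeq : moreauEnv f lam x = (Ex : EReal) := (EReal.coe_toReal hetop hebot).symm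
  obtain ⟨r₀, hr₀, hball⟩ := Metric.eventually_nhds_iff.mp (hsub δ hδ)
  set r : ℝ := min δ (min 1 (r₀ / 2)) with hrdef
  have hrpos : 0 < r := lt_min hδ (lt_min one_pos (by linarith))
  have hrδ : r ≤ δ := min_le_left _ _
  have hr1 : r ≤ 1 := le_trans (min_le_right _ _) (min_le_left _ _)
  have hrr₀ : r < r₀ := lt_of_le_of_lt (le_trans (min_le_right _ _) (min_le_right _ _))
    (by linarith)
  -- pick an approximate prox point
  have hlt : moreauEnv f lam x < ((Ex + δ * r : ℝ) : EReal) := by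
    rw [hEeq, EReal.coe_lt_coe_iff]
    nlinarith [mul_pos hδ hrpos]
  obtain ⟨p, hp⟩ := iInf_lt_iff.mp hlt
  have hfptop : f p ≠ ⊤ := by
    intro h
    rw [h, EReal.top_add_of_ne_bot (by simp)] at hp
    exact (not_top_lt hp)
  set P : ℝ := (f p).toReal with hPdef
  have hfpeq : f p = (P : EReal) := (EReal.coe_toReal hfptop (hbot p)).symm
  have hP : P + ‖p - x‖ ^ 2 / (2 * lam) < Ex + δ * r := by
    rw [hfpeq, ← EReal.coe_add, EReal.coe_lt_coe_iff] at hp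
    exact hp
  -- key inequality
  have hkey : ∀ z : E, dist z x < r₀ →
      Ex + inner ℝ v (z - x) - δ * ‖z - x‖ ≤ P + ‖p - z‖ ^ 2 / (2 * lam) := by
    intro z hz
    have h1 := hball hz
    have h2 : moreauEnv f lam z ≤ ((P + ‖p - z‖ ^ 2 / (2 * lam) : ℝ) : EReal) := by
      have := moreau_le f lam z p
      rwa [hfpeq, ← EReal.coe_add] at this
    have := le_trans h1 h2
    exact EReal.coe_le_coe_iff.mp this
  set w : E := v + (lam)⁻¹ • (p - x) with hwdef
  have hwnorm : ‖w‖ ≤ 2 * δ + δ / (2 * lam) := by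
    rcases eq_or_ne w 0 with hw0 | hw0
    · rw [hw0, norm_zero]; positivity
    · have hwpos : 0 < ‖w‖ := norm_pos_iff.mpr hw0
      set z : E := x + (r / ‖w‖) • w with hzdef
      have hzx : z - x = (r / ‖w‖) • w := by rw [hzdef]; abel
      have hznorm : ‖z - x‖ = r := by
        rw [hzx, norm_smul, Real.norm_eq_abs, abs_of_pos (by positivity)]
        field_simp
      have hzdist : dist z x < r₀ := by
        rw [dist_eq_norm, hznorm]; exact hrr₀
      have h3 := hkey z hzdist
      rw [hznorm] at h3
      have hip : inner ℝ v (z - x) = (r / ‖w‖) * inner ℝ v w := by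
        rw [hzx, real_inner_smul_right]
      have hexp : ‖p - z‖ ^ 2 = ‖p - x‖ ^ 2 - 2 * ((r / ‖w‖) * inner ℝ (p - x) w) + r ^ 2 := by
        have : p - z = (p - x) - (z - x) := by abel
        rw [this, hzx, norm_sub_sq_real, real_inner_smul_right, norm_smul,
          Real.norm_eq_abs, abs_of_pos (by positivity)]
        have : (r / ‖w‖ * ‖w‖) = r := by field_simp
        rw [this]
      have hinner : inner ℝ v w + (lam)⁻¹ * inner ℝ (p - x) w = ‖w‖ ^ 2 := by
        have : (inner ℝ w w : ℝ) = ‖w‖ ^ 2 := real_inner_self_eq_norm_sq w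
        rw [← this, hwdef, inner_add_left, real_inner_smul_left]
      rw [hip, hexp] at h3
      -- combine h3 and hP
      have hlamne : (2 * lam) ≠ 0 := by positivity
      have e1 : (‖p - x‖ ^ 2 - 2 * (r / ‖w‖ * inner ℝ (p - x) w) + r ^ 2) / (2 * lam)
          = ‖p - x‖ ^ 2 / (2 * lam) - (r / ‖w‖ * inner ℝ (p - x) w) / lam
            + r ^ 2 / (2 * lam) := by
        field_simp
      rw [e1] at h3
      have key : r / ‖w‖ * inner ℝ v w + (r / ‖w‖ * inner ℝ (p - x) w) / lam
          < 2 * δ * r + r ^ 2 / (2 * lam) := by linarith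
      have e2 : r / ‖w‖ * inner ℝ v w + (r / ‖w‖ * inner ℝ (p - x) w) / lam = r * ‖w‖ := by
        have e3 : r / ‖w‖ * inner ℝ v w + (r / ‖w‖ * inner ℝ (p - x) w) / lam
            = r / ‖w‖ * ((inner ℝ v w : ℝ) + (lam)⁻¹ * inner ℝ (p - x) w) := by
          field_simp
        rw [e3, hinner]
        rw [show ‖w‖ ^ 2 = ‖w‖ * ‖w‖ by ring]
        field_simp
      rw [e2] at key
      have e4 : 2 * δ * r + r ^ 2 / (2 * lam) = r * (2 * δ + r / (2 * lam)) := by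
        field_simp
      rw [e4] at key
      have h6 : ‖w‖ ≤ 2 * δ + r / (2 * lam) := le_of_lt ((mul_lt_mul_iff_right₀ hrpos).mp key)
      have h7 : r / (2 * lam) ≤ δ / (2 * lam) := by gcongr
      linarith
  refine ⟨p, ?_, ?_⟩
  · rw [hfpeq, hEeq, ← EReal.coe_add, EReal.coe_le_coe_iff]
    have hd1 : (0:ℝ) ≤ ‖p - x‖ ^ 2 / (2 * lam) := by positivity
    have hd2 : δ * r ≤ δ * 1 := mul_le_mul_of_nonneg_left hr1 hδ.le
    linarith
  · have : ‖p - x‖ = lam * ‖(lam)⁻¹ • (p - x)‖ := by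
      rw [norm_smul, Real.norm_eq_abs, abs_of_pos (by positivity)]
      field_simp
    rw [this]
    have h7 : ‖(lam)⁻¹ • (p - x)‖ ≤ ‖v‖ + ‖w‖ := by
      have : (lam)⁻¹ • (p - x) = w - v := by rw [hwdef]; abel
      rw [this]
      calc ‖w - v‖ ≤ ‖w‖ + ‖v‖ := norm_sub_le _ _
        _ = ‖v‖ + ‖w‖ := by ring
    have h8 : lam * ‖(lam)⁻¹ • (p - x)‖ ≤ lam * (‖v‖ + ‖w‖) :=
      mul_le_mul_of_nonneg_left h7 (le_of_lt hlam)
    have h9 : lam * (‖v‖ + ‖w‖) ≤ lam * ‖v‖ + lam * (2*δ + δ/(2*lam)) := by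
      nlinarith [hwnorm]
    have h10 : lam * (2*δ + δ/(2*lam)) ≤ δ * (2 * lam + 1) := by
      rw [mul_add]
      have : lam * (δ / (2 * lam)) = δ / 2 := by field_simp
      rw [this]
      nlinarith
    linarith

lemma crit_le {f : E → EReal} (hbot : ∀ z, f z ≠ ⊥) (hlsc : LowerSemicontinuous f)
    {lam : ℝ} (hlam : 0 < lam) {xb : E}
    (hcrit : (0:E) ∈ lsubd (moreauEnv f lam) xb) :
    f xb ≤ moreauEnv f lam xb := by
  obtain ⟨xs, vs, hxs, hes, hvs, hfs⟩ := hcrit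
  have hδ : ∀ k : ℕ, (0:ℝ) < 1/(k+1) := fun k => by positivity
  choose p hp1 hp2 using fun k => prox_approx hbot hlam (hfs k) (hδ k)
  have hvnorm : Tendsto (fun k => ‖vs k‖) atTop (𝓝 0) := by
    have h0 : ‖(0:E)‖ = 0 := norm_zero
    simpa [h0] using hvs.norm
  have hdelta : Tendsto (fun k : ℕ => (1:ℝ)/(k+1)) atTop (𝓝 0) :=
    tendsto_one_div_add_atTop_nhds_zero_nat
  have hpt : Tendsto p atTop (𝓝 xb) := by
    rw [tendsto_iff_dist_tendsto_zero]
    have hbound : ∀ k, dist (p k) xb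
        ≤ (lam * ‖vs k‖ + (1/(k+1)) * (2*lam+1)) + dist (xs k) xb := by
      intro k
      calc dist (p k) xb ≤ dist (p k) (xs k) + dist (xs k) xb := dist_triangle _ _ _
        _ ≤ _ := by
          have h2 := hp2 k
          rw [dist_eq_norm]
          exact add_le_add h2 le_rfl
    have hlim : Tendsto (fun k => (lam * ‖vs k‖ + (1/(k+1)) * (2*lam+1))
        + dist (xs k) xb) atTop (𝓝 0) := by
      have h1 : Tendsto (fun k => lam * ‖vs k‖) atTop (𝓝 0) := by
        simpa using hvnorm.const_mul lam
      have h2 : Tendsto (fun k : ℕ => (1/(k+1) : ℝ) * (2*lam+1)) atTop (𝓝 0) := by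
        simpa using hdelta.mul_const (2*lam+1)
      have h3 : Tendsto (fun k => dist (xs k) xb) atTop (𝓝 0) :=
        tendsto_iff_dist_tendsto_zero.mp hxs
      simpa using (h1.add h2).add h3
    exact squeeze_zero (fun k => dist_nonneg) hbound hlim
  -- conclude by lower semicontinuity
  have hmain : ∀ c : ℝ, (c : EReal) < f xb → (c : EReal) ≤ moreauEnv f lam xb := by
    intro c hc
    have hev : ∀ᶠ k in atTop, (c : EReal) < f (p k) := hpt.eventually (hlsc xb _ hc)
    have hev2 : ∀ᶠ k in atTop,
        (c : EReal) ≤ moreauEnv f lam (xs k) + ((1/(k+1) : ℝ) : EReal) :=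
      hev.mono fun k hk => le_of_lt (lt_of_lt_of_le hk (hp1 k))
    have hsum : Tendsto (fun k => moreauEnv f lam (xs k) + ((1/(k+1) : ℝ) : EReal))
        atTop (𝓝 (moreauEnv f lam xb)) := by
      have hc2 : Tendsto (fun k : ℕ => ((1/(k+1) : ℝ) : EReal)) atTop (𝓝 (0 : EReal)) := by
        rw [show ((0:EReal)) = ((0:ℝ):EReal) by simp]
        exact EReal.tendsto_coe.mpr hdelta
      have hcont := EReal.continuousAt_add
        (p := (moreauEnv f lam xb, (0 : EReal))) (by simp) (by simp)
      have := hcont.tendsto.comp (hes.prodMk_nhds hc2)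
      simpa [Function.comp_def] using this
    exact ge_of_tendsto hsum hev2
  by_contra h
  push_neg at h
  obtain ⟨c, hc1, hc2⟩ := EReal.exists_between_coe_real h
  exact absurd (hmain c hc2) (not_le.mpr hc1)


lemma toENN_coe (r : ℝ) : toENN (r : EReal) = ENNReal.ofReal r := by
  simp [toENN]


end AuxLemmas

set_option maxHeartbeats 1000000 in
theorem stmt11 {n : ℕ} (f : EuclideanSpace ℝ (Fin n) → EReal)
    (hproper : IsProperFn f) (hlsc : LowerSemicontinuous f) (hpb : ProxBdd f)
    (lam : ℝ) (hlam : lam ∈ Set.Ioo 0 (proxThreshold f))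
    (xb : EuclideanSpace ℝ (Fin n)) (hdom : f xb ≠ ⊤)
    (hcrit : (0 : EuclideanSpace ℝ (Fin n)) ∈ lsubd (moreauEnv f lam) xb)
    (γ μ : ℝ) (hγ : 0 < γ) (hμ : 2 * lam ≤ μ) (ha : LHEBAt f xb γ μ)
    (hb : ∃ εb > (0:ℝ), ∀ x ∈ Metric.ball xb εb, f xb < f x →
      ∃ y ∈ proxPts f lam x, f xb ≤ f y) :
    LHEBAt (moreauEnv f lam) xb (max 2 γ) ((2:ℝ) ^ (max 1 (γ - 1)) * μ) :=  by
  have hlam0 : 0 < lam := hlam.1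
  have hbot := hproper.2
  have hcrit' : moreauEnv f lam xb = f xb :=
    le_antisymm (moreau_le_self f lam xb) (crit_le hbot hlsc hlam0 hcrit)
  have hμpos : 0 < μ := lt_of_lt_of_le (by linarith) hμ
  set F : ℝ := (f xb).toReal with hF
  have hfxb : f xb = (F : EReal) := (EReal.coe_toReal hdom (hbot xb)).symm
  obtain ⟨η₀, hη₀, hha⟩ := ha
  obtain ⟨εb, hεb, hhb⟩ := hb
  set η : ℝ := min (min εb (η₀/2)) (Real.sqrt (2*lam/μ)) with hηdef
  have hηpos : 0 < η := lt_min (lt_min hεb (by linarith)) (Real.sqrt_pos.mpr (by positivity))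
  refine ⟨η, hηpos, fun x hx hlt => ?_⟩
  rw [Metric.mem_ball] at hx
  have hexb : moreauEnv f lam xb = (F : EReal) := by rw [hcrit', hfxb]
  have hflt : f xb < f x := by
    calc f xb = moreauEnv f lam xb := hcrit'.symm
      _ < moreauEnv f lam x := hlt
      _ ≤ f x := moreau_le_self f lam x
  have hxball : x ∈ Metric.ball xb εb := by
    rw [Metric.mem_ball]
    exact lt_of_lt_of_le hx (le_trans (min_le_left _ _) (min_le_left _ _))
  obtain ⟨y, hyp, hfy⟩ := hhb x hxball hflt
  set B : ℝ := ‖y - x‖^2/(2*lam) with hB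
  have hBnn : 0 ≤ B := by positivity
  have hex : moreauEnv f lam x = f y + ((B : ℝ) : EReal) :=
    le_antisymm (moreau_le f lam x y) (le_iInf hyp)
  have hfytop : f y ≠ ⊤ := by
    intro h
    rw [h, EReal.top_add_of_ne_bot (by simp)] at hex
    have hub := moreau_le f lam x xb
    rw [hex, hfxb, ← EReal.coe_add] at hub
    exact EReal.coe_ne_top _ (top_le_iff.mp hub)
  set G : ℝ := (f y).toReal with hG
  have hfyeq : f y = (G : EReal) := (EReal.coe_toReal hfytop (hbot y)).symm
  have hFG : F ≤ G := by
    rw [hfxb, hfyeq] at hfy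
    exact_mod_cast hfy
  have hexR : moreauEnv f lam x = ((G + B : ℝ) : EReal) := by
    rw [hex, hfyeq, EReal.coe_add]
  set Δ : ℝ := G + B - F with hΔdef
  have hΔpos : 0 < Δ := by
    rw [hexb, hexR, EReal.coe_lt_coe_iff] at hlt
    simp only [hΔdef]
    linarith
  -- upper bound on Δ
  have hub : G + B ≤ F + ‖xb - x‖^2/(2*lam) := by
    have h := moreau_le f lam x xb
    rw [hexR, hfxb, ← EReal.coe_add, EReal.coe_le_coe_iff] at h
    exact h
  have hnx : ‖xb - x‖ < η := by
    rw [dist_eq_norm] at hx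
    rw [norm_sub_rev]
    exact hx
  have hη2 : η^2 ≤ 2*lam/μ := by
    rw [← Real.sq_sqrt (le_of_lt (by positivity : (0:ℝ) < 2*lam/μ))]
    exact pow_le_pow_left₀ hηpos.le (min_le_right _ _) 2
  have hxb2 : ‖xb - x‖^2 ≤ η^2 := pow_le_pow_left₀ (norm_nonneg _) hnx.le 2
  have hΔle : Δ ≤ 1/μ := by
    have h1 : Δ ≤ ‖xb - x‖^2/(2*lam) := by
      simp only [hΔdef]; linarith
    have h2 : ‖xb - x‖^2/(2*lam) ≤ (2*lam/μ)/(2*lam) := by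
      gcongr
      linarith
    have h3 : (2*lam/μ)/(2*lam) = 1/μ := by
      field_simp
    linarith
  have hμΔ : μ * Δ ≤ 1 := by
    have := mul_le_mul_of_nonneg_left hΔle hμpos.le
    rw [mul_one_div, div_self hμpos.ne'] at this
    exact this
  have hμB1 : μ * B ≤ 1 := by nlinarith
  have hμA1 : μ * (G - F) ≤ 1 := by nlinarith
  -- y is close to xb
  have hyx : ‖y - x‖ ≤ ‖xb - x‖ := by
    have h1 : ‖y - x‖^2 ≤ ‖xb - x‖^2 := by
      have h2 : ‖y - x‖^2 = 2*lam*B := by rw [hB]; field_simp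
      have hdiv : 2*lam*(‖xb - x‖^2/(2*lam)) = ‖xb - x‖^2 := by field_simp
      nlinarith [mul_le_mul_of_nonneg_left hub (by linarith : (0:ℝ) ≤ 2*lam), hdiv, h2,
        mul_nonneg (by linarith : (0:ℝ) ≤ 2*lam) (by linarith [hFG] : (0:ℝ) ≤ G - F)]
    have h4 := Real.sqrt_le_sqrt h1
    rwa [Real.sqrt_sq (norm_nonneg _), Real.sqrt_sq (norm_nonneg _)] at h4
  have hyball : y ∈ Metric.ball xb η₀ := by
    rw [Metric.mem_ball, dist_eq_norm]
    have h1 : ‖y - xb‖ ≤ ‖y - x‖ + ‖x - xb‖ := norm_sub_le_norm_sub_add_norm_sub _ _ _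
    have h2 : ‖x - xb‖ = ‖xb - x‖ := norm_sub_rev _ _
    have h3 : η ≤ η₀/2 := le_trans (min_le_left _ _) (min_le_right _ _)
    linarith
  -- bound on infEdist y Sf
  set Sf : Set (EuclideanSpace ℝ (Fin n)) := slev f (f xb) with hSf
  set b : ℝ≥0∞ := EMetric.infEdist y Sf with hb'
  set a : ℝ≥0∞ := edist x y with ha'
  have hbγ : b ^ γ ≤ ENNReal.ofReal (μ * (G - F)) := by
    rcases eq_or_lt_of_le hFG with heq | hlt'
    · have hymem : y ∈ Sf := by
        show f y ≤ f xb
        rw [hfyeq, hfxb, ← heq]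
      rw [hb', show EMetric.infEdist y Sf = 0 from EMetric.infEdist_zero_of_mem hymem, ENNReal.zero_rpow_of_pos hγ]
      exact zero_le
    · have hfylt : f xb < f y := by
        rw [hfxb, hfyeq]
        exact_mod_cast hlt'
      have h := hha y hyball hfylt
      have hsub : f y - f xb = ((G - F : ℝ) : EReal) := by
        rw [hfxb, hfyeq, ← EReal.coe_sub]
      rw [hsub, toENN_coe, ← ENNReal.ofReal_mul hμpos.le] at h
      exact h
  have ha2 : a ^ (2:ℝ) ≤ ENNReal.ofReal (μ * B) := by
    rw [ha', edist_dist, ENNReal.ofReal_rpow_of_nonneg dist_nonneg (by norm_num : (0:ℝ) ≤ 2)]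
    apply ENNReal.ofReal_le_ofReal
    rw [Real.rpow_two, dist_eq_norm, norm_sub_rev]
    have h2 : ‖y - x‖^2 = 2*lam*B := by rw [hB]; field_simp
    nlinarith
  -- exponents
  set s : ℝ := max 2 γ with hsdef
  have hs2 : (2:ℝ) ≤ s := le_max_left _ _
  have hsγ : γ ≤ s := le_max_right _ _
  have hs1 : (1:ℝ) ≤ s := by linarith
  have hs0 : (0:ℝ) ≤ s := by linarith
  -- main chain
  have hSsub : Sf ⊆ slev (moreauEnv f lam) (moreauEnv f lam xb) := by
    intro z hz
    show moreauEnv f lam z ≤ moreauEnv f lam xb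
    calc moreauEnv f lam z ≤ f z := moreau_le_self f lam z
      _ ≤ f xb := hz
      _ = moreauEnv f lam xb := hcrit'.symm
  have step1 : EMetric.infEdist x (slev (moreauEnv f lam) (moreauEnv f lam xb)) ≤ b + a :=
    le_trans (EMetric.infEdist_anti hSsub) EMetric.infEdist_le_infEdist_add_edist
  have hbs : b ^ s ≤ ENNReal.ofReal (μ * (G - F)) := by
    have hγ0 : γ ≠ 0 := ne_of_gt hγ
    have hrw : b ^ s = (b ^ γ) ^ (s / γ) := by
      rw [← ENNReal.rpow_mul]
      congr 1
      field_simp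
    rw [hrw]
    calc (b ^ γ) ^ (s/γ) ≤ (ENNReal.ofReal (μ * (G - F))) ^ (s/γ) :=
          ENNReal.rpow_le_rpow hbγ (by positivity)
      _ ≤ (ENNReal.ofReal (μ * (G - F))) ^ (1:ℝ) :=
          ENNReal.rpow_le_rpow_of_exponent_ge (ENNReal.ofReal_le_one.mpr hμA1)
            ((one_le_div hγ).mpr hsγ)
      _ = _ := ENNReal.rpow_one _
  have has : a ^ s ≤ ENNReal.ofReal (μ * B) := by
    have hrw : a ^ s = (a ^ (2:ℝ)) ^ (s / 2) := by
      rw [← ENNReal.rpow_mul]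
      congr 1
      field_simp
    rw [hrw]
    calc (a ^ (2:ℝ)) ^ (s/2) ≤ (ENNReal.ofReal (μ * B)) ^ (s/2) :=
          ENNReal.rpow_le_rpow ha2 (by positivity)
      _ ≤ (ENNReal.ofReal (μ * B)) ^ (1:ℝ) :=
          ENNReal.rpow_le_rpow_of_exponent_ge (ENNReal.ofReal_le_one.mpr hμB1)
            ((one_le_div (by norm_num : (0:ℝ) < 2)).mpr hs2)
      _ = _ := ENNReal.rpow_one _
  have hsum : b ^ s + a ^ s ≤ ENNReal.ofReal (μ * Δ) := by
    calc b ^ s + a ^ s ≤ ENNReal.ofReal (μ * (G - F)) + ENNReal.ofReal (μ * B) :=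
          add_le_add hbs has
      _ = ENNReal.ofReal (μ * (G - F) + μ * B) :=
          (ENNReal.ofReal_add (by nlinarith) (by nlinarith)).symm
      _ = ENNReal.ofReal (μ * Δ) := by rw [hΔdef]; ring_nf
  have hmaxeq : max 1 (γ - 1) = s - 1 := by
    rw [hsdef, show (1:ℝ) = 2 - 1 by norm_num]
    rw [← max_sub_sub_right]
    norm_num
  have htoENN : toENN (moreauEnv f lam x - moreauEnv f lam xb) = ENNReal.ofReal Δ := by
    rw [hexR, hexb, ← EReal.coe_sub, toENN_coe]
  rw [htoENN, hmaxeq]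
  calc EMetric.infEdist x (slev (moreauEnv f lam) (moreauEnv f lam xb)) ^ s
      ≤ (b + a) ^ s := ENNReal.rpow_le_rpow step1 hs0
    _ ≤ 2 ^ (s - 1) * (b ^ s + a ^ s) := ennreal_add_rpow hs1
    _ ≤ 2 ^ (s - 1) * ENNReal.ofReal (μ * Δ) := mul_le_mul_right hsum _
    _ = ENNReal.ofReal ((2:ℝ) ^ (s - 1) * μ) * ENNReal.ofReal Δ := by
        rw [ENNReal.ofReal_mul (by positivity), ENNReal.ofReal_mul (by positivity)]
        rw [← ENNReal.ofReal_rpow_of_pos (by norm_num : (0:ℝ) < 2)]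
        rw [ENNReal.ofReal_ofNat, mul_assoc]


end
end
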